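/- No permutation p of {1,...,n} whose first entry is n has sort-number exactly 2 under SC_231. -/

import Mathlib

/-- One step-by-step implementation of the `SC_231` stack-sorting machine.
`sc231Aux input stack out`: the next input entry is pushed onto the stack unless
pushing it would create a consecutive occurrence of the pattern `231` read from
top to bottom among the stack entries (i.e. the incoming `x` on top of `y`, `z`
with `z < x < y`), in which case the top of the stack is popped and appended to
the output; once the input is exhausted the remaining stack entries are popped. -/
def sc231Aux : List ℕ → List ℕ → List ℕ → List ℕ
  | [], stack, out => out ++ stack
  | x :: rest, y :: z :: s, out =>
      if z < x ∧ x < y then sc231Aux (x :: rest) (z :: s) (out ++ [y])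
      else sc231Aux rest (x :: y :: z :: s) out
  | x :: rest, stack, out => sc231Aux rest (x :: stack) out
termination_by input stack _ => 2 * input.length + stack.length
decreasing_by all_goals (simp; try omega)

/-- The consecutive-pattern-avoiding stack sort map `SC_231`. -/
def SC231 (p : List ℕ) : List ℕ := sc231Aux p [] []

/-- The list of entries that are *pre-popped* while `SC_231` processes the
input, i.e. popped while input entries still remain. -/
def prePopsAux : List ℕ → List ℕ → List ℕ
  | [], _ => []
  | x :: rest, y :: z :: s =>
      if z < x ∧ x < y then y :: prePopsAux (x :: rest) (z :: s)
      else prePopsAux rest (x :: y :: z :: s)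
  | x :: rest, stack => prePopsAux rest (x :: stack)
termination_by input stack => 2 * input.length + stack.length
decreasing_by all_goals (simp; try omega)

def prePops (p : List ℕ) : List ℕ := prePopsAux p []

/-- `p` has a peak: an interior position whose entry exceeds both neighbours. -/
def HasPeak (p : List ℕ) : Prop :=
  ∃ i, i + 2 < p.length ∧ p[i]! < p[i+1]! ∧ p[i+2]! < p[i+1]!

/-- `p` is a permutation of `{1, …, n}` (written as a list of its entries). -/
def IsPermOf (n : ℕ) (p : List ℕ) : Prop := p.Perm (List.range' 1 n)

/-- `p` contains the (classical) pattern `q`. -/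
def ContainsPat (p q : List ℕ) : Prop :=
  ∃ s : List ℕ, s.Sublist p ∧ s.length = q.length ∧
    ∀ i j, i < s.length → j < s.length → (s[i]! < s[j]! ↔ q[i]! < q[j]!)

def AvoidsPat (p q : List ℕ) : Prop := ¬ ContainsPat p q

/-- The sort-number of `p`: the least `k` with `SC_231^k(p)` peakless. -/
noncomputable def sortNum (p : List ℕ) : ℕ := sInf {k | ¬ HasPeak (SC231^[k] p)}

/-! ### Auxiliary machinery -/

set_option linter.unnecessarySeqFocus false

/-- The final stack (top first) after running the machine. -/
def stk : List ℕ → List ℕ → List ℕ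
  | [], s => s
  | x :: rest, y :: z :: s =>
      if z < x ∧ x < y then stk (x :: rest) (z :: s)
      else stk rest (x :: y :: z :: s)
  | x :: rest, s => stk rest (x :: s)
termination_by input stack => 2 * input.length + stack.length
decreasing_by all_goals (simp; try omega)

theorem sc_nil (x : ℕ) (rest o : List ℕ) : sc231Aux (x::rest) [] o = sc231Aux rest [x] o := by
  rw [sc231Aux] <;> intros <;> simp_all
theorem sc_one (x b : ℕ) (rest o : List ℕ) : sc231Aux (x::rest) [b] o = sc231Aux rest [x,b] o := by
  rw [sc231Aux] <;> intros <;> simp_all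
theorem pre_nil (x : ℕ) (rest : List ℕ) : prePopsAux (x::rest) [] = prePopsAux rest [x] := by
  rw [prePopsAux] <;> intros <;> simp_all
theorem pre_one (x b : ℕ) (rest : List ℕ) : prePopsAux (x::rest) [b] = prePopsAux rest [x,b] := by
  rw [prePopsAux] <;> intros <;> simp_all
theorem stk_nil (x : ℕ) (rest : List ℕ) : stk (x::rest) [] = stk rest [x] := by
  rw [stk] <;> intros <;> simp_all
theorem stk_one (x b : ℕ) (rest : List ℕ) : stk (x::rest) [b] = stk rest [x,b] := by
  rw [stk] <;> intros <;> simp_all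

theorem mem_sc (inp s : List ℕ) : ∀ o a, a ∈ sc231Aux inp s o ↔ a ∈ o ∨ a ∈ inp ∨ a ∈ s := by
  induction inp, s using stk.induct with
  | case1 s => intro o a; simp [sc231Aux]
  | case2 x rest y z s h ih => intro o a; rw [sc231Aux, if_pos h, ih]; simp; tauto
  | case3 x rest y z s h ih => intro o a; rw [sc231Aux, if_neg h, ih]; simp; tauto
  | case4 x rest s h ih =>
      intro o a
      rcases s with _ | ⟨b, s⟩
      · rw [sc_nil, ih]; simp; tauto
      · rcases s with _ | ⟨c, s⟩
        · rw [sc_one, ih]; simp; tauto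
        · exact (h b c s rfl).elim

theorem eq_sc (inp s : List ℕ) : ∀ o, sc231Aux inp s o = o ++ prePopsAux inp s ++ stk inp s := by
  induction inp, s using stk.induct with
  | case1 s => intro o; simp [sc231Aux, prePopsAux, stk]
  | case2 x rest y z s h ih =>
      intro o; rw [sc231Aux, if_pos h, prePopsAux, if_pos h, stk, if_pos h, ih]; simp
  | case3 x rest y z s h ih =>
      intro o; rw [sc231Aux, if_neg h, prePopsAux, if_neg h, stk, if_neg h, ih]
  | case4 x rest s h ih =>
      intro o
      rcases s with _ | ⟨b, s⟩
      · rw [sc_nil, pre_nil, stk_nil, ih]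
      · rcases s with _ | ⟨c, s⟩
        · rw [sc_one, pre_one, stk_one, ih]
        · exact (h b c s rfl).elim

theorem sc_append_max {n : ℕ} (inp s : List ℕ) :
    ∀ o, (∀ x ∈ inp, x < n) → sc231Aux inp (s ++ [n]) o = sc231Aux inp s o ++ [n] := by
  induction inp, s using stk.induct with
  | case1 s => intro o _; simp [sc231Aux]
  | case2 x rest y z s h ih =>
      intro o hlt
      rw [show (y::z::s) ++ [n] = y::z::(s++[n]) from rfl, sc231Aux, if_pos h, sc231Aux, if_pos h]
      exact ih (o ++ [y]) hlt
  | case3 x rest y z s h ih =>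
      intro o hlt
      rw [show (y::z::s) ++ [n] = y::z::(s++[n]) from rfl, sc231Aux, if_neg h, sc231Aux, if_neg h]
      exact ih o (fun a ha => hlt a (List.mem_cons_of_mem _ ha))
  | case4 x rest s h ih =>
      intro o hlt
      have hx : x < n := hlt x List.mem_cons_self
      have hnext : ∀ a ∈ rest, a < n := fun a ha => hlt a (List.mem_cons_of_mem _ ha)
      rcases s with _ | ⟨b, s⟩
      · rw [show ([] : List ℕ) ++ [n] = [n] from rfl, sc_one, sc_nil]
        exact ih o hnext
      · rcases s with _ | ⟨c, s⟩
        · rw [show [b] ++ [n] = b::n::[] from rfl, sc231Aux,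
            if_neg (by omega : ¬(n < x ∧ x < b)), sc_one]
          exact ih o hnext
        · exact (h b c s rfl).elim

theorem sc_input_max {n : ℕ} (inp s : List ℕ) :
    ∀ o, (∀ x ∈ inp, x < n) → (∀ x ∈ s, x < n) →
      sc231Aux (inp ++ [n]) s o = o ++ prePopsAux inp s ++ n :: stk inp s := by
  induction inp, s using stk.induct with
  | case1 s =>
      intro o _ hs
      rcases s with _ | ⟨b, s⟩
      · rw [show ([] : List ℕ) ++ [n] = [n] from rfl, sc_nil, sc231Aux, prePopsAux, stk]; simp
      · rcases s with _ | ⟨c, s⟩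
        · rw [show ([] : List ℕ) ++ [n] = [n] from rfl, sc_one, sc231Aux, prePopsAux, stk]; simp
        · have hb : b < n := hs b (by simp)
          rw [show ([] : List ℕ) ++ [n] = n :: [] from rfl, sc231Aux,
            if_neg (by omega : ¬(c < n ∧ n < b)), sc231Aux, prePopsAux, stk]
          simp
  | case2 x rest y z s h ih =>
      intro o hin hs
      rw [show (x::rest) ++ [n] = x::(rest++[n]) from rfl, sc231Aux, if_pos h,
        prePopsAux, if_pos h, stk, if_pos h]
      rw [show (x:ℕ)::(rest++[n]) = (x::rest) ++ [n] from rfl,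
        ih (o ++ [y]) hin (fun a ha => hs a (List.mem_cons_of_mem _ ha))]
      simp
  | case3 x rest y z s h ih =>
      intro o hin hs
      rw [show (x::rest) ++ [n] = x::(rest++[n]) from rfl, sc231Aux, if_neg h,
        prePopsAux, if_neg h, stk, if_neg h]
      refine ih o (fun a ha => hin a (List.mem_cons_of_mem _ ha)) ?_
      intro a ha
      rcases List.mem_cons.1 ha with rfl | ha
      · exact hin a List.mem_cons_self
      · exact hs a ha
  | case4 x rest s h ih =>
      intro o hin hs
      have hnext : ∀ a ∈ rest, a < n := fun a ha => hin a (List.mem_cons_of_mem _ ha)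
      have hx : x < n := hin x List.mem_cons_self
      have hs' : ∀ a ∈ x :: s, a < n := by
        intro a ha; rcases List.mem_cons.1 ha with rfl | ha
        · exact hx
        · exact hs a ha
      rcases s with _ | ⟨b, s⟩
      · rw [show (x::rest) ++ [n] = x::(rest++[n]) from rfl, sc_nil, pre_nil, stk_nil]
        exact ih o hnext hs'
      · rcases s with _ | ⟨c, s⟩
        · rw [show (x::rest) ++ [n] = x::(rest++[n]) from rfl, sc_one, pre_one, stk_one]
          exact ih o hnext hs'
        · exact (h b c s rfl).elim

theorem stk_ne (inp s : List ℕ) : ∀ (_ : s ≠ [] ∨ inp ≠ []), stk inp s ≠ [] := by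
  induction inp, s using stk.induct with
  | case1 s => intro h; rw [stk]; tauto
  | case2 x rest y z s h ih => intro _; rw [stk, if_pos h]; exact ih (Or.inl (by simp))
  | case3 x rest y z s h ih => intro _; rw [stk, if_neg h]; exact ih (Or.inl (by simp))
  | case4 x rest s h ih =>
      intro _
      rcases s with _ | ⟨b, s⟩
      · rw [stk_nil]; exact ih (Or.inl (by simp))
      · rcases s with _ | ⟨c, s⟩
        · rw [stk_one]; exact ih (Or.inl (by simp))
        · exact (h b c s rfl).elim

theorem stk_of_nopop (inp s : List ℕ) :
    ∀ (_ : prePopsAux inp s = []), stk inp s = inp.reverse ++ s := by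
  induction inp, s using stk.induct with
  | case1 s => intro _; rw [stk]; simp
  | case2 x rest y z s h ih => intro hp; rw [prePopsAux, if_pos h] at hp; simp at hp
  | case3 x rest y z s h ih =>
      intro hp; rw [prePopsAux, if_neg h] at hp
      rw [stk, if_neg h, ih hp]; simp
  | case4 x rest s h ih =>
      intro hp
      rcases s with _ | ⟨b, s⟩
      · rw [pre_nil] at hp; rw [stk_nil, ih hp]; simp
      · rcases s with _ | ⟨c, s⟩
        · rw [pre_one] at hp; rw [stk_one, ih hp]; simp
        · exact (h b c s rfl).elim

theorem gb {l : List ℕ} {i : ℕ} (h : i < l.length) : l[i]! = l[i] := getElem!_pos l i h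
theorem gbneg {l : List ℕ} {i : ℕ} (h : ¬ i < l.length) : l[i]! = 0 := getElem!_neg l i h
theorem gbcons (a : ℕ) (l : List ℕ) (j : ℕ) : (a :: l)[j+1]! = l[j]! := by
  by_cases h : j < l.length
  · rw [gb (show j+1 < (a::l).length by simp; omega), gb h, List.getElem_cons_succ]
  · rw [gbneg (by simp; omega), gbneg h]
theorem gbappL {l l' : List ℕ} {i : ℕ} (h : i < l.length) : (l ++ l')[i]! = l[i]! := by
  rw [gb (show i < (l ++ l').length by simp; omega), gb h]
  exact List.getElem_append_left h
theorem gbappR {l l' : List ℕ} {i : ℕ} (h : l.length ≤ i) : (l ++ l')[i]! = l'[i - l.length]! := by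
  by_cases h2 : i < (l ++ l').length
  · rw [gb h2, gb (show i - l.length < l'.length by simp at h2; omega)]
    exact List.getElem_append_right h
  · rw [gbneg h2, gbneg (show ¬ (i - l.length < l'.length) by simp at h2; omega)]
theorem gbrev {l : List ℕ} {i : ℕ} (h : i < l.length) : l.reverse[i]! = l[l.length - 1 - i]! := by
  rw [gb (show i < l.reverse.length by simpa using h), gb (show l.length - 1 - i < l.length by omega)]
  exact List.getElem_reverse (by simpa using h)
theorem gbmem {l : List ℕ} {i : ℕ} (h : i < l.length) : l[i]! ∈ l := by
  rw [gb h]; exact List.getElem_mem h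

/-- No permutation of `{1,…,n}` whose first entry is `n` has sort-number exactly `2`. -/
theorem first_entry_max_sortNum_ne_two (n : ℕ) (p : List ℕ) (hp : IsPermOf n p)
    (hhead : p.head? = some n) : sortNum p ≠ 2 := by
  intro hEq
  have hS : {k | ¬ HasPeak (SC231^[k] p)}.Nonempty := by
    by_contra hc
    rw [Set.not_nonempty_iff_eq_empty] at hc
    rw [sortNum, hc, Nat.sInf_empty] at hEq
    simp at hEq
  have hmem := Nat.sInf_mem hS
  rw [sortNum] at hEq
  rw [hEq] at hmem
  have h2 : ¬ HasPeak (SC231^[2] p) := hmem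
  have h1 : HasPeak (SC231^[1] p) := by
    by_contra hc
    have hle : sInf {k | ¬ HasPeak (SC231^[k] p)} ≤ 1 := Nat.sInf_le hc
    omega
  clear hmem hS
  rcases p with _ | ⟨a, t⟩
  · simp at hhead
  have hna : n = a := by have h' := hhead; simp at h'; omega
  subst hna
  have hnd : (n :: t).Nodup := hp.nodup_iff.2 List.nodup_range'
  have ht : ∀ x ∈ t, x < n := by
    intro x hx
    have hmem' : x ∈ List.range' 1 n := hp.mem_iff.1 (List.mem_cons_of_mem _ hx)
    have hb := List.mem_range'_1.1 hmem'
    have hne : x ≠ n := by rintro rfl; exact (List.nodup_cons.1 hnd).1 hx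
    omega
  have hw : ∀ x ∈ SC231 t, x < n := by
    intro x hx
    have hx' := (mem_sc t [] [] x).1 hx
    simp only [List.not_mem_nil, false_or, or_false] at hx'
    exact ht x hx'
  have hr : SC231 (n :: t) = SC231 t ++ [n] := by
    show sc231Aux (n::t) [] [] = _
    rw [sc_nil]
    simpa [SC231] using sc_append_max t [] [] ht
  set w := SC231 t with hwdef
  have hr2 : SC231 (w ++ [n]) = prePops w ++ n :: stk w [] := by
    show sc231Aux (w ++ [n]) [] [] = _
    rw [sc_input_max w [] [] hw (by simp)]
    simp [prePops]
  have h1' : HasPeak (w ++ [n]) := by rwa [Function.iterate_one, hr] at h1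
  have h2' : ¬ HasPeak (SC231 (w ++ [n])) := by
    rwa [show SC231^[2] (n::t) = SC231 (SC231^[1] (n::t)) from
      Function.iterate_succ_apply' SC231 1 (n::t), Function.iterate_one, hr] at h2
  by_cases hpre : prePops w = []
  · -- no pre-pops : second pass gives `n :: w.reverse`
    have hsr : SC231 (w ++ [n]) = n :: w.reverse := by
      rw [hr2, hpre, stk_of_nopop w [] (by simpa [prePops] using hpre)]
      simp
    obtain ⟨i, hi, hv1, hv2⟩ := h1'
    rw [List.length_append, List.length_singleton] at hi
    have hii : i + 2 < w.length := by
      by_contra hc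
      have he : i + 2 = w.length := by omega
      have e2 : (w ++ [n])[i+2]! = n := by
        rw [gbappR (by omega), he, Nat.sub_self, gb (by simp), List.getElem_cons_zero]
      have e1 : (w ++ [n])[i+1]! = w[i+1]! := gbappL (by omega)
      rw [e1, e2] at hv2
      have := hw _ (gbmem (show i+1 < w.length by omega))
      omega
    have q1 : w[i]! < w[i+1]! := by rwa [gbappL (by omega), gbappL (by omega)] at hv1
    have q2 : w[i+2]! < w[i+1]! := by rwa [gbappL (by omega), gbappL (by omega)] at hv2
    obtain ⟨d, hd⟩ : ∃ d, w.length = i + 3 + d := ⟨w.length - (i+3), by omega⟩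
    apply h2'
    rw [hsr]
    have e1 : (n :: w.reverse)[d+1]! = w[i+2]! := by
      rw [gbcons, gbrev (by omega), show w.length - 1 - d = i+2 from by omega]
    have e2 : (n :: w.reverse)[d+1+1]! = w[i+1]! := by
      rw [show d+1+1 = (d+1)+1 from rfl, gbcons, gbrev (by omega),
        show w.length - 1 - (d+1) = i+1 from by omega]
    have e3 : (n :: w.reverse)[d+1+2]! = w[i]! := by
      rw [show d+1+2 = (d+2)+1 from by omega, gbcons, gbrev (by omega),
        show w.length - 1 - (d+2) = i from by omega]
    exact ⟨d+1, by simp; omega, by rw [e1, e2]; exact q2, by rw [e3, e2]; exact q1⟩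
  · -- pre-pops exist : `n` sits in the interior of the second pass
    have hwne : w ≠ [] := by
      intro h0
      apply hpre
      rw [h0, prePops, prePopsAux]
    have hsne : stk w [] ≠ [] := stk_ne w [] (Or.inr hwne)
    have hmemw : ∀ a, a ∈ prePops w ∨ a ∈ stk w [] → a ∈ w := by
      intro a ha
      have he := eq_sc w [] []
      have h1'' : a ∈ sc231Aux w [] [] := by
        rw [he]; simp only [List.nil_append, List.mem_append]
        simpa [prePops] using ha
      have := (mem_sc w [] [] a).1 h1''
      simpa using this
    obtain ⟨k, hk⟩ : ∃ k, (prePops w).length = k + 1 := by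
      rcases hne : prePops w with _ | ⟨b, o⟩
      · exact absurd hne hpre
      · exact ⟨o.length, by simp⟩
    have hslen : 0 < (stk w []).length := List.length_pos_iff.2 hsne
    apply h2'
    rw [hr2]
    have e2 : (prePops w ++ n :: stk w [])[k+1]! = n := by
      rw [gbappR (by omega), show k+1 - (prePops w).length = 0 from by omega,
        gb (by simp), List.getElem_cons_zero]
    refine ⟨k, by simp [hk]; omega, ?_, ?_⟩
    · rw [gbappL (by omega), e2]
      exact hw _ (hmemw _ (Or.inl (gbmem (by omega))))
    · have e3 : (prePops w ++ n :: stk w [])[k+2]! = (stk w [])[0]! := by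
        rw [gbappR (by omega), show k+2 - (prePops w).length = 0+1 from by omega, gbcons]
      rw [e3, e2]
      exact hw _ (hmemw _ (Or.inr (gbmem hslen)))
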